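/- arXiv:2004.05167 — 5 statements merged into one kernel-verified Lean document; each statement's English description precedes it below -/
import Mathlib

section
/- Suppose A is an individually fair cohort selection mechanism selecting cohorts of size k which is monotonic, i.e., for all u, v ∈ U with p(u) ≥ p(v) and every C ⊆ U∖{u,v} with |C| = k−1 one has A(C ∪ {u}) ≥ A(C ∪ {v}). Then for all distinct u, v ∈ U: (1/2)·Σ_{C ⊆ U∖{u,v}, |C| = k−1} |A(C ∪ {u}) − A(C ∪ {v})| ≤ (1/2)·D(u,v). (This is the statement that a monotonic individually fair mechanism satisfies 0.5-Notion 1 for the swapping mapping.) -/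
open Finset

lemma aux_sum {α : Type*} [Fintype α] [DecidableEq α] (k : ℕ) (hk : 1 ≤ k)
    (A : Finset α → ℝ) (u v : α) (huv : u ≠ v) :
    ∑ C ∈ ((univ : Finset α) \ {u, v}).powerset.filter (fun C => C.card = k - 1),
        A (insert u C)
      = ∑ C ∈ (univ : Finset α).powerset.filter
          (fun C => C.card = k ∧ u ∈ C ∧ v ∉ C), A C := by
  apply Finset.sum_nbij' (i := fun C => insert u C) (j := fun C => C.erase u)
  · intro C hC
    simp only [mem_filter, mem_powerset] at hC ⊢
    obtain ⟨hsub, hcard⟩ := hC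
    have hu : u ∉ C := fun h => by
      have := hsub h; simp [mem_sdiff] at this
    have hv : v ∉ C := fun h => by
      have := hsub h; simp [mem_sdiff] at this
    refine ⟨subset_univ _, ?_, mem_insert_self _ _, ?_⟩
    · rw [card_insert_of_notMem hu, hcard]; omega
    · simp [huv.symm, hv]
  · intro C hC
    simp only [mem_filter, mem_powerset] at hC ⊢
    obtain ⟨-, hcard, huC, hvC⟩ := hC
    constructor
    · intro x hx
      simp only [mem_erase] at hx
      simp only [mem_sdiff, mem_univ, true_and, mem_insert, mem_singleton]
      rintro (rfl | rfl)
      · exact hx.1 rfl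
      · exact hvC hx.2
    · rw [card_erase_of_mem huC, hcard]
  · intro C hC
    simp only [mem_filter, mem_powerset] at hC
    have hu : u ∉ C := fun h => by
      have := hC.1 h; simp [mem_sdiff] at this
    exact erase_insert hu
  · intro C hC
    simp only [mem_filter, mem_powerset] at hC
    exact insert_erase hC.2.2.1
  · intro C hC; rfl

lemma aux_diff {α : Type*} [Fintype α] [DecidableEq α] (k : ℕ) (hk : 1 ≤ k)
    (A : Finset α → ℝ) (p : α → ℝ)
    (hp : ∀ u, p u =
      ∑ C ∈ (univ : Finset α).powerset.filter (fun C => C.card = k ∧ u ∈ C), A C)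
    (u v : α) (huv : u ≠ v) :
    ∑ C ∈ ((univ : Finset α) \ {u, v}).powerset.filter (fun C => C.card = k - 1),
        (A (insert u C) - A (insert v C)) = p u - p v := by
  rw [Finset.sum_sub_distrib, aux_sum k hk A u v huv]
  have hpair : ({u, v} : Finset α) = {v, u} := pair_comm u v
  rw [hpair, aux_sum k hk A v u huv.symm, hp u, hp v]
  -- split p u and p v sums by membership of the other element
  have hsplit : ∀ a b : α,
      (∑ C ∈ (univ : Finset α).powerset.filter (fun C => C.card = k ∧ a ∈ C), A C)
      = (∑ C ∈ (univ : Finset α).powerset.filter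
            (fun C => C.card = k ∧ a ∈ C ∧ b ∈ C), A C)
      + (∑ C ∈ (univ : Finset α).powerset.filter
            (fun C => C.card = k ∧ a ∈ C ∧ b ∉ C), A C) := by
    intro a b
    rw [← Finset.sum_filter_add_sum_filter_not
        ((univ : Finset α).powerset.filter (fun C => C.card = k ∧ a ∈ C)) (fun C => b ∈ C)]
    congr 1 <;> · congr 1; ext C; simp [and_assoc, and_comm]
  rw [hsplit u v, hsplit v u]
  have : (∑ C ∈ (univ : Finset α).powerset.filter
            (fun C => C.card = k ∧ u ∈ C ∧ v ∈ C), A C)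
       = (∑ C ∈ (univ : Finset α).powerset.filter
            (fun C => C.card = k ∧ v ∈ C ∧ u ∈ C), A C) := by
    congr 1; ext C; simp; tauto
  rw [this]; ring

/-- A monotonic, individually fair cohort selection mechanism selecting
cohorts of size `k` satisfies `0.5`-Notion 1 for the swapping mapping: for all distinct
`u, v`, `(1/2) Σ_{C ⊆ U∖{u,v}, |C| = k−1} |A(C ∪ {u}) − A(C ∪ {v})| ≤ (1/2) D(u,v)`. -/
theorem stmt1 {α : Type*} [Fintype α] [DecidableEq α] (k : ℕ) (hk : 1 ≤ k)
    (A : Finset α → ℝ) (D : α → α → ℝ) (p : α → ℝ)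
    (hp : ∀ u, p u =
      ∑ C ∈ (univ : Finset α).powerset.filter (fun C => C.card = k ∧ u ∈ C), A C)
    (hA0 : ∀ C, 0 ≤ A C)
    (hAk : ∀ C : Finset α, C.card ≠ k → A C = 0)
    (hA1 : ∑ C ∈ (univ : Finset α).powerset, A C = 1)
    (hD : ∀ u v, 0 ≤ D u v)
    (hfair : ∀ u v, |p u - p v| ≤ D u v)
    (hmono : ∀ u v : α, p v ≤ p u →
      ∀ C ∈ ((univ : Finset α) \ {u, v}).powerset, C.card = k - 1 →
        A (insert v C) ≤ A (insert u C)) :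
    ∀ u v : α, u ≠ v →
      (1/2) * ∑ C ∈ ((univ : Finset α) \ {u, v}).powerset.filter (fun C => C.card = k - 1),
          |A (insert u C) - A (insert v C)|
        ≤ (1/2) * D u v := by
  intro u v huv
  have h2 : (0:ℝ) < 1/2 := by norm_num
  rw [mul_le_mul_iff_right₀ h2]
  rcases le_total (p v) (p u) with h | h
  · have heq : ∀ C ∈ ((univ : Finset α) \ {u, v}).powerset.filter (fun C => C.card = k - 1),
        |A (insert u C) - A (insert v C)| = A (insert u C) - A (insert v C) := by
      intro C hC
      simp only [mem_filter] at hC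
      exact abs_of_nonneg (sub_nonneg.2 (hmono u v h C hC.1 hC.2))
    rw [Finset.sum_congr rfl heq, aux_diff k hk A p hp u v huv]
    calc p u - p v ≤ |p u - p v| := le_abs_self _
      _ ≤ D u v := hfair u v
  · have heq : ∀ C ∈ ((univ : Finset α) \ {u, v}).powerset.filter (fun C => C.card = k - 1),
        |A (insert u C) - A (insert v C)| = -(A (insert u C) - A (insert v C)) := by
      intro C hC
      simp only [mem_filter] at hC
      have hCmem : C ∈ ((univ : Finset α) \ {v, u}).powerset := by
        rw [pair_comm v u]; exact hC.1
      exact abs_of_nonpos (sub_nonpos.2 (hmono v u h C hCmem hC.2))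
    rw [Finset.sum_congr rfl heq, Finset.sum_neg_distrib, aux_diff k hk A p hp u v huv]
    calc -(p u - p v) ≤ |p u - p v| := neg_le_abs _
      _ ≤ D u v := hfair u v
end

section
/- For all distinct u, v ∈ U and every integer k ≥ 1: w(u) · Σ_{S ⊆ U∖{u}, |S| ≥ k−1} P^{U∖{u}}[S] · (k/(|S|+1)) − w(v) · Σ_{S ⊆ U∖{v}, |S| ≥ k−1} P^{U∖{v}}[S] · (k/(|S|+1)) = (w(u) − w(v)) · Σ_{S ⊆ U∖{u,v}, |S| ≥ k−1} P^{U∖{u,v}}[S] · (k/(|S|+1)). -/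
open Finset

/-- `Pw w S' S = (∏_{x∈S} w(x)) · (∏_{x∈S'∖S} (1 − w(x)))`. -/
def Pw {α : Type*} [DecidableEq α] (w : α → ℝ) (S' S : Finset α) : ℝ :=
  (∏ x ∈ S, w x) * (∏ x ∈ S' \ S, (1 - w x))

lemma Pw_insert_notMem {α : Type*} [DecidableEq α] (w : α → ℝ) (B : Finset α) (v : α)
    (hv : v ∉ B) (S : Finset α) (hS : S ⊆ B) :
    Pw w (insert v B) S = (1 - w v) * Pw w B S := by
  have h1 : insert v B \ S = insert v (B \ S) := by
    ext x; simp only [mem_sdiff, mem_insert]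
    constructor
    · rintro ⟨h | h, h2⟩
      · exact Or.inl h
      · exact Or.inr ⟨h, h2⟩
    · rintro (rfl | ⟨h, h2⟩)
      · exact ⟨Or.inl rfl, fun hx => hv (hS hx)⟩
      · exact ⟨Or.inr h, h2⟩
  have h2 : v ∉ B \ S := fun h => hv (mem_sdiff.mp h).1
  rw [Pw, Pw, h1, prod_insert h2]; ring

lemma Pw_insert_mem {α : Type*} [DecidableEq α] (w : α → ℝ) (B : Finset α) (v : α)
    (hv : v ∉ B) (S : Finset α) (hS : S ⊆ B) :
    Pw w (insert v B) (insert v S) = w v * Pw w B S := by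
  have h1 : insert v B \ insert v S = B \ S := by
    ext x; simp only [mem_sdiff, mem_insert, not_or]
    constructor
    · rintro ⟨h | h, h2, h3⟩
      · exact absurd h h2
      · exact ⟨h, h3⟩
    · rintro ⟨h, h2⟩
      exact ⟨Or.inr h, fun hx => hv (hx ▸ h), h2⟩
  have h2 : v ∉ S := fun h => hv (hS h)
  rw [Pw, Pw, h1, prod_insert h2]; ring

lemma sum_powerset_split {α : Type*} [DecidableEq α] (w : α → ℝ) (B : Finset α) (v : α)
    (hv : v ∉ B) (g : ℕ → ℝ) :
    ∑ S ∈ (insert v B).powerset, Pw w (insert v B) S * g S.card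
      = (1 - w v) * (∑ T ∈ B.powerset, Pw w B T * g T.card)
        + w v * ∑ T ∈ B.powerset, Pw w B T * g (T.card + 1) := by
  rw [powerset_insert, sum_union]
  · have h1 : ∑ S ∈ B.powerset, Pw w (insert v B) S * g S.card
        = (1 - w v) * ∑ T ∈ B.powerset, Pw w B T * g T.card := by
      rw [mul_sum]
      refine sum_congr rfl fun S hS => ?_
      rw [Pw_insert_notMem w B v hv S (mem_powerset.mp hS)]; ring
    have h2 : ∑ S ∈ B.powerset.image (insert v), Pw w (insert v B) S * g S.card
        = w v * ∑ T ∈ B.powerset, Pw w B T * g (T.card + 1) := by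
      rw [sum_image, mul_sum]
      · refine sum_congr rfl fun S hS => ?_
        have hS' := mem_powerset.mp hS
        have hvS : v ∉ S := fun h => hv (hS' h)
        rw [Pw_insert_mem w B v hv S hS', card_insert_of_notMem hvS]; ring
      · intro x hx y hy hxy
        have hx' : v ∉ x := fun h => hv (mem_powerset.mp hx h)
        have hy' : v ∉ y := fun h => hv (mem_powerset.mp hy h)
        ext a
        constructor
        · intro ha
          have : a ∈ insert v y := hxy ▸ mem_insert_of_mem ha
          rcases mem_insert.mp this with rfl | h
          · exact absurd ha hx'
          · exact h
        · intro ha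
          have : a ∈ insert v x := hxy ▸ mem_insert_of_mem ha
          rcases mem_insert.mp this with rfl | h
          · exact absurd ha hy'
          · exact h
    rw [h1, h2]
  · rw [disjoint_left]
    intro S hS hS'
    obtain ⟨T, _, rfl⟩ := mem_image.mp hS'
    exact (fun h => hv (mem_powerset.mp hS h)) (mem_insert_self v T)

/-- for distinct `u, v` and `k ≥ 1`,
`w(u)·Σ_{S ⊆ U∖{u}, |S| ≥ k−1} P^{U∖{u}}[S]·(k/(|S|+1))
 − w(v)·Σ_{S ⊆ U∖{v}, |S| ≥ k−1} P^{U∖{v}}[S]·(k/(|S|+1))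
 = (w(u) − w(v)) · Σ_{S ⊆ U∖{u,v}, |S| ≥ k−1} P^{U∖{u,v}}[S]·(k/(|S|+1))`. -/
theorem stmt6 {α : Type*} [Fintype α] [DecidableEq α] (w : α → ℝ)
    (hw : ∀ x, 0 ≤ w x ∧ w x ≤ 1) (k : ℕ) (hk : 1 ≤ k) (u v : α) (huv : u ≠ v) :
    w u *
        (∑ S ∈ ((univ : Finset α) \ {u}).powerset.filter (fun S => k - 1 ≤ S.card),
          Pw w (univ \ {u}) S * ((k : ℝ) / ((S.card : ℝ) + 1)))
      - w v *
        (∑ S ∈ ((univ : Finset α) \ {v}).powerset.filter (fun S => k - 1 ≤ S.card),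
          Pw w (univ \ {v}) S * ((k : ℝ) / ((S.card : ℝ) + 1)))
      = (w u - w v) *
        ∑ S ∈ ((univ : Finset α) \ {u, v}).powerset.filter (fun S => k - 1 ≤ S.card),
          Pw w (univ \ {u, v}) S * ((k : ℝ) / ((S.card : ℝ) + 1)) := by
  set g : ℕ → ℝ := fun n => if k - 1 ≤ n then (k : ℝ) / ((n : ℝ) + 1) else 0 with hg
  have hfilter : ∀ (A : Finset α),
      ∑ S ∈ A.powerset.filter (fun S => k - 1 ≤ S.card),
        Pw w A S * ((k : ℝ) / ((S.card : ℝ) + 1))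
      = ∑ S ∈ A.powerset, Pw w A S * g S.card := by
    intro A
    rw [sum_filter]
    refine sum_congr rfl fun S _ => ?_
    simp only [hg]
    by_cases h : k - 1 ≤ S.card <;> simp [h]
  have hB : ∀ x ∈ ({u, v} : Finset α), x ∉ (univ : Finset α) \ {u, v} := by
    intro x hx h
    exact (mem_sdiff.mp h).2 hx
  have hvB : v ∉ (univ : Finset α) \ {u, v} := hB v (by simp)
  have huB : u ∉ (univ : Finset α) \ {u, v} := hB u (by simp)
  have hu : (univ : Finset α) \ {u} = insert v ((univ : Finset α) \ {u, v}) := by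
    ext x
    simp only [mem_sdiff, mem_univ, true_and, mem_insert, mem_singleton, not_or]
    constructor
    · intro h
      by_cases hx : x = v
      · exact Or.inl hx
      · exact Or.inr ⟨h, hx⟩
    · rintro (rfl | ⟨h, _⟩)
      · exact fun h => huv h.symm
      · exact h
  have hv : (univ : Finset α) \ {v} = insert u ((univ : Finset α) \ {u, v}) := by
    ext x
    simp only [mem_sdiff, mem_univ, true_and, mem_insert, mem_singleton, not_or]
    constructor
    · intro h
      by_cases hx : x = u
      · exact Or.inl hx
      · exact Or.inr ⟨hx, h⟩
    · rintro (rfl | ⟨_, h⟩)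
      · exact huv
      · exact h
  rw [hfilter, hfilter, hfilter, hu, hv,
    sum_powerset_split w _ v hvB g, sum_powerset_split w _ u huB g]
  ring
end

section
/- For all distinct u, v ∈ U and every integer k ≥ 1: κ1 ≤ ((k+1)/k) · κ2. -/
open Finset

/-- for distinct `u, v` and `k ≥ 1`, `κ1 ≤ ((k+1)/k)·κ2`, where
`κ1 = Σ_{S ⊆ U∖{u,v}, |S| ≥ k−1} P^{U∖{u,v}}[S]·(k/(|S|+1))` and
`κ2 = Σ_{S ⊆ U∖{u,v}, |S| ≥ k−2} P^{U∖{u,v}}[S]·(k/(|S|+2))`. -/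
theorem stmt8 {α : Type*} [Fintype α] [DecidableEq α] (w : α → ℝ)
    (hw : ∀ x, 0 ≤ w x ∧ w x ≤ 1) (k : ℕ) (hk : 1 ≤ k) (u v : α) (huv : u ≠ v)
    (κ1 κ2 : ℝ)
    (hκ1 : κ1 = ∑ S ∈ ((univ : Finset α) \ {u, v}).powerset.filter (fun S => k - 1 ≤ S.card),
      Pw w (univ \ {u, v}) S * ((k : ℝ) / ((S.card : ℝ) + 1)))
    (hκ2 : κ2 = ∑ S ∈ ((univ : Finset α) \ {u, v}).powerset.filter (fun S => k - 2 ≤ S.card),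
      Pw w (univ \ {u, v}) S * ((k : ℝ) / ((S.card : ℝ) + 2))) :
    κ1 ≤ (((k : ℝ) + 1) / (k : ℝ)) * κ2 := by
  have hk0 : (0:ℝ) < k := by exact_mod_cast hk
  have hPw : ∀ S : Finset α, 0 ≤ Pw w (univ \ {u, v}) S := by
    intro S
    apply mul_nonneg
    · exact Finset.prod_nonneg fun x _ => (hw x).1
    · exact Finset.prod_nonneg fun x _ => by linarith [(hw x).2]
  subst hκ1 hκ2
  rw [Finset.mul_sum]
  calc ∑ S ∈ ((univ : Finset α) \ {u, v}).powerset.filter (fun S => k - 1 ≤ S.card),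
        Pw w (univ \ {u, v}) S * ((k : ℝ) / ((S.card : ℝ) + 1))
      ≤ ∑ S ∈ ((univ : Finset α) \ {u, v}).powerset.filter (fun S => k - 1 ≤ S.card),
        (((k : ℝ) + 1) / (k : ℝ)) * (Pw w (univ \ {u, v}) S * ((k : ℝ) / ((S.card : ℝ) + 2))) := by
        apply Finset.sum_le_sum
        intro S hS
        have hcard : k - 1 ≤ S.card := (Finset.mem_filter.mp hS).2
        have hck : (k : ℝ) ≤ (S.card : ℝ) + 1 := by
          have : k ≤ S.card + 1 := by omega
          exact_mod_cast this
        have hc0 : (0:ℝ) < (S.card : ℝ) + 1 := by positivity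
        have hc2 : (0:ℝ) < (S.card : ℝ) + 2 := by positivity
        have key : (k : ℝ) / ((S.card : ℝ) + 1) ≤ (((k : ℝ) + 1) / (k : ℝ)) * ((k : ℝ) / ((S.card : ℝ) + 2)) := by
          rw [div_mul_div_comm, div_le_div_iff₀ hc0 (by positivity)]
          nlinarith
        calc Pw w (univ \ {u, v}) S * ((k : ℝ) / ((S.card : ℝ) + 1))
            ≤ Pw w (univ \ {u, v}) S * ((((k : ℝ) + 1) / (k : ℝ)) * ((k : ℝ) / ((S.card : ℝ) + 2))) :=
              mul_le_mul_of_nonneg_left key (hPw S)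
          _ = (((k : ℝ) + 1) / (k : ℝ)) * (Pw w (univ \ {u, v}) S * ((k : ℝ) / ((S.card : ℝ) + 2))) := by ring
    _ ≤ ∑ S ∈ ((univ : Finset α) \ {u, v}).powerset.filter (fun S => k - 2 ≤ S.card),
        (((k : ℝ) + 1) / (k : ℝ)) * (Pw w (univ \ {u, v}) S * ((k : ℝ) / ((S.card : ℝ) + 2))) := by
        apply Finset.sum_le_sum_of_subset_of_nonneg
        · intro S hS
          simp only [Finset.mem_filter] at hS ⊢
          exact ⟨hS.1, by omega⟩
        · intro S _ _
          have := hPw S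
          positivity
end

section
/- Let U be a finite set, k ≥ 2 an integer, w : U → ℝ with 0 ≤ w(x) ≤ 1 for all x ∈ U and Σ_{x∈U} w(x) ≥ 3k/2, and let D : U × U → ℝ with D ≥ 0. Set α1 = 1.6 if k ≥ 12 and α1 = 13 if 2 ≤ k < 12, and suppose the weights are (1/α1)-individually fair, i.e., |w(u) − w(v)| ≤ D(u,v)/α1 for all u, v ∈ U. Define Z = Σ_{S ⊆ U, |S| ≥ k} P^U[S] and, for u ∈ U, p(u) = w(u) · (Σ_{S ⊆ U∖{u}, |S| ≥ k−1} P^{U∖{u}}[S] · (k/(|S|+1))) / Z (the probability that the Conditioning Mechanism with weights w selects u). Then Z > 0 and |p(u) − p(v)| ≤ D(u,v) for all u, v ∈ U, i.e., the Conditioning Mechanism is individually fair. -/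
open Finset

set_option linter.unusedSectionVars false
set_option linter.unusedVariables false
set_option linter.deprecated false
set_option maxHeartbeats 2000000

lemma exp_half_ge : (3/2 : ℝ) ≤ Real.exp (1/2) := by
  linarith [Real.add_one_le_exp ((1:ℝ)/2)]

lemma pow_exp_le_one (m : ℕ) : ((3:ℝ)/2)^m * Real.exp (-(m:ℝ)/2) ≤ 1 := by
  have h1 : ((3:ℝ)/2)^m ≤ Real.exp ((m:ℝ)/2) := by
    calc ((3:ℝ)/2)^m ≤ (Real.exp (1/2))^m := pow_le_pow_left₀ (by norm_num) exp_half_ge m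
      _ = Real.exp ((m:ℝ) * (1/2)) := (Real.exp_nat_mul _ m).symm
      _ = Real.exp ((m:ℝ)/2) := by ring_nf
  calc ((3:ℝ)/2)^m * Real.exp (-(m:ℝ)/2)
      ≤ Real.exp ((m:ℝ)/2) * Real.exp (-(m:ℝ)/2) :=
        mul_le_mul_of_nonneg_right h1 (Real.exp_nonneg _)
    _ = 1 := by rw [← Real.exp_add]; rw [show (m:ℝ)/2 + -(m:ℝ)/2 = 0 by ring, Real.exp_zero]

lemma Zpos_aux (k : ℕ) (hk : 1 ≤ k) (μ : ℝ) (hμ : 3*(k:ℝ)/2 ≤ μ) :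
    (3/2:ℝ)^(k-1) * Real.exp (-μ/3) ≤ 2/3 := by
  have hc : ((k-1:ℕ):ℝ) = (k:ℝ) - 1 := by
    push_cast [hk]; ring
  have h1 : ((3:ℝ)/2)^(k-1) ≤ Real.exp (((k:ℝ)-1)/2) := by
    calc ((3:ℝ)/2)^(k-1) ≤ (Real.exp (1/2))^(k-1) := pow_le_pow_left₀ (by norm_num) exp_half_ge _
      _ = Real.exp (((k-1:ℕ):ℝ) * (1/2)) := (Real.exp_nat_mul _ _).symm
      _ = Real.exp (((k:ℝ)-1)/2) := by rw [hc]; ring_nf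
  have h2 : Real.exp (-μ/3) ≤ Real.exp (-(k:ℝ)/2) := Real.exp_le_exp.2 (by linarith)
  calc (3/2:ℝ)^(k-1) * Real.exp (-μ/3)
      ≤ Real.exp (((k:ℝ)-1)/2) * Real.exp (-(k:ℝ)/2) :=
        mul_le_mul h1 h2 (Real.exp_nonneg _) (Real.exp_nonneg _)
    _ = Real.exp (-(1/2)) := by rw [← Real.exp_add]; ring_nf
    _ ≤ 2/3 := by
        rw [Real.exp_neg]
        rw [show (2/3 : ℝ) = (3/2 : ℝ)⁻¹ by norm_num]
        exact inv_anti₀ (by norm_num) exp_half_ge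

lemma numeric_main (k : ℕ) (hk : 2 ≤ k) (α1 μ : ℝ)
    (hα1 : α1 = if 12 ≤ k then (1.6:ℝ) else 13)
    (hμ : 3*(k:ℝ)/2 - 2/α1 ≤ μ) (hμpos : 0 < μ) :
    (k:ℝ)/μ + α1 * ((3/2:ℝ)^(k-1) * Real.exp (-μ/3)) ≤ α1 := by
  have hexp1 : (2.7:ℝ) ≤ Real.exp 1 := le_of_lt (lt_trans (by norm_num) Real.exp_one_gt_d9)
  by_cases h12 : 12 ≤ k
  · rw [hα1, if_pos h12] at *
    norm_num at hμ ⊢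
    obtain ⟨m, rfl⟩ : ∃ m, k = 12 + m := ⟨k - 12, by omega⟩
    have hcast : ((12 + m : ℕ):ℝ) = 12 + (m:ℝ) := by push_cast; ring
    rw [hcast] at hμ ⊢
    have h1 : (12 + (m:ℝ))/μ ≤ 48/67 := by
      rw [div_le_div_iff₀ hμpos (by norm_num)]
      have hm0 : (0:ℝ) ≤ (m:ℝ) := Nat.cast_nonneg m
      nlinarith
    have h2 : ((3:ℝ)/2)^(12+m-1) * Real.exp (-μ/3) ≤ (3/2:ℝ)^11 * Real.exp (-(67:ℝ)/12) := by
      rw [show 12+m-1 = 11+m by omega, pow_add]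
      have he : Real.exp (-μ/3) ≤ Real.exp (-(67:ℝ)/12 + -((m:ℝ)/2)) :=
        Real.exp_le_exp.2 (by linarith)
      calc (3/2:ℝ)^11 * (3/2:ℝ)^m * Real.exp (-μ/3)
          ≤ (3/2:ℝ)^11 * (3/2:ℝ)^m * (Real.exp (-(67:ℝ)/12) * Real.exp (-((m:ℝ)/2))) := by
            rw [← Real.exp_add]
            exact mul_le_mul_of_nonneg_left he (by positivity)
        _ = ((3/2:ℝ)^11 * Real.exp (-(67:ℝ)/12)) * ((3/2:ℝ)^m * Real.exp (-(m:ℝ)/2)) := by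
            ring_nf
        _ ≤ ((3/2:ℝ)^11 * Real.exp (-(67:ℝ)/12)) * 1 :=
            mul_le_mul_of_nonneg_left (pow_exp_le_one m) (by positivity)
        _ = (3/2:ℝ)^11 * Real.exp (-(67:ℝ)/12) := mul_one _
    have hE : (227:ℝ) ≤ Real.exp ((67:ℝ)/12) := by
      have h5 : (2.7:ℝ)^5 ≤ Real.exp 5 := by
        calc (2.7:ℝ)^5 ≤ (Real.exp 1)^5 := pow_le_pow_left₀ (by norm_num) hexp1 5
          _ = Real.exp (((5:ℕ):ℝ) * 1) := (Real.exp_nat_mul _ _).symm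
          _ = Real.exp 5 := by norm_num
      have h7 : (19:ℝ)/12 ≤ Real.exp (7/12) := by
        linarith [Real.add_one_le_exp ((7:ℝ)/12)]
      calc (227:ℝ) ≤ (2.7:ℝ)^5 * (19/12) := by norm_num
        _ ≤ Real.exp 5 * Real.exp (7/12) :=
            mul_le_mul h5 h7 (by norm_num) (Real.exp_nonneg _)
        _ = Real.exp ((67:ℝ)/12) := by rw [← Real.exp_add]; norm_num
    have hE2 : Real.exp (-(67:ℝ)/12) ≤ 1/227 := by
      rw [show (-(67:ℝ)/12) = -((67:ℝ)/12) by ring, Real.exp_neg,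
        show (1:ℝ)/227 = ((227:ℝ))⁻¹ by norm_num]
      exact inv_anti₀ (by norm_num) hE
    have h3 : ((3:ℝ)/2)^(12+m-1) * Real.exp (-μ/3) ≤ (3/2:ℝ)^11 * (1/227) :=
      h2.trans (mul_le_mul_of_nonneg_left hE2 (by positivity))
    nlinarith [h1, h3]
  · rw [hα1, if_neg h12] at *
    obtain ⟨m, rfl⟩ : ∃ m, k = 2 + m := ⟨k - 2, by omega⟩
    have hcast : ((2 + m : ℕ):ℝ) = 2 + (m:ℝ) := by push_cast; ring
    rw [hcast] at hμ ⊢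
    have hm0 : (0:ℝ) ≤ (m:ℝ) := Nat.cast_nonneg m
    have h1 : (2 + (m:ℝ))/μ ≤ 26/37 := by
      rw [div_le_div_iff₀ hμpos (by norm_num)]
      nlinarith
    have h2 : ((3:ℝ)/2)^(2+m-1) * Real.exp (-μ/3) ≤ (3/2:ℝ)^1 * Real.exp (-(37:ℝ)/39) := by
      rw [show 2+m-1 = 1+m by omega, pow_add]
      have he : Real.exp (-μ/3) ≤ Real.exp (-(37:ℝ)/39 + -((m:ℝ)/2)) :=
        Real.exp_le_exp.2 (by linarith)
      calc (3/2:ℝ)^1 * (3/2:ℝ)^m * Real.exp (-μ/3)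
          ≤ (3/2:ℝ)^1 * (3/2:ℝ)^m * (Real.exp (-(37:ℝ)/39) * Real.exp (-((m:ℝ)/2))) := by
            rw [← Real.exp_add]
            exact mul_le_mul_of_nonneg_left he (by positivity)
        _ = ((3/2:ℝ)^1 * Real.exp (-(37:ℝ)/39)) * ((3/2:ℝ)^m * Real.exp (-(m:ℝ)/2)) := by
            ring_nf
        _ ≤ ((3/2:ℝ)^1 * Real.exp (-(37:ℝ)/39)) * 1 :=
            mul_le_mul_of_nonneg_left (pow_exp_le_one m) (by positivity)
        _ = (3/2:ℝ)^1 * Real.exp (-(37:ℝ)/39) := mul_one _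
    have hE : (76:ℝ)/39 ≤ Real.exp ((37:ℝ)/39) := by
      linarith [Real.add_one_le_exp ((37:ℝ)/39)]
    have hE2 : Real.exp (-(37:ℝ)/39) ≤ 39/76 := by
      rw [show (-(37:ℝ)/39) = -((37:ℝ)/39) by ring, Real.exp_neg,
        show (39:ℝ)/76 = ((76:ℝ)/39)⁻¹ by norm_num]
      exact inv_anti₀ (by norm_num) hE
    have h3 : ((3:ℝ)/2)^(2+m-1) * Real.exp (-μ/3) ≤ (3/2:ℝ)^1 * (39/76) :=
      h2.trans (mul_le_mul_of_nonneg_left hE2 (by positivity))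
    nlinarith [h1, h3]


section Aux
variable {α : Type*} [DecidableEq α] (w : α → ℝ)

lemma Pw_nonneg (hw : ∀ x, 0 ≤ w x ∧ w x ≤ 1) (S' S : Finset α) : 0 ≤ Pw w S' S :=
  mul_nonneg (Finset.prod_nonneg fun i _ => (hw i).1)
    (Finset.prod_nonneg fun i _ => by linarith [(hw i).2])

lemma Pw_genfun (T : Finset α) (x : ℝ) :
    ∑ S ∈ T.powerset, Pw w T S * x ^ S.card = ∏ i ∈ T, (w i * x + (1 - w i)) := by
  rw [Finset.prod_add]
  refine Finset.sum_congr rfl fun S hS => ?_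
  rw [Finset.prod_mul_distrib, Finset.prod_const]
  unfold Pw; ring

lemma Pw_sum_one (T : Finset α) : ∑ S ∈ T.powerset, Pw w T S = 1 := by
  have h := Pw_genfun w T 1
  simp only [one_pow, mul_one] at h
  rw [h]
  exact Finset.prod_eq_one fun i _ => by ring

lemma genfun_le_exp (hw : ∀ x, 0 ≤ w x ∧ w x ≤ 1) (T : Finset α) (x : ℝ)
    (hx0 : 0 ≤ x) (hx1 : x ≤ 1) :
    ∏ i ∈ T, (w i * x + (1 - w i)) ≤ Real.exp (-(1 - x) * ∑ i ∈ T, w i) := by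
  have h : Real.exp (-(1 - x) * ∑ i ∈ T, w i) = ∏ i ∈ T, Real.exp (-(1 - x) * w i) := by
    rw [← Real.exp_sum, Finset.mul_sum]
  rw [h]
  refine Finset.prod_le_prod (fun i _ => ?_) (fun i _ => ?_)
  · nlinarith [(hw i).1, (hw i).2]
  · calc w i * x + (1 - w i) = -(1 - x) * w i + 1 := by ring
      _ ≤ Real.exp (-(1 - x) * w i) := by linarith [Real.add_one_le_exp (-(1 - x) * w i)]

lemma tail_le (hw : ∀ x, 0 ≤ w x ∧ w x ≤ 1) (T : Finset α) (a : ℕ) (x : ℝ)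
    (hx0 : 0 < x) (hx1 : x ≤ 1) :
    ∑ S ∈ T.powerset.filter (fun S => S.card ≤ a), Pw w T S
      ≤ (∏ i ∈ T, (w i * x + (1 - w i))) / x ^ a := by
  rw [← Pw_genfun w T x, le_div_iff₀ (pow_pos hx0 a), Finset.sum_mul]
  refine le_trans (Finset.sum_le_sum ?_)
    (Finset.sum_le_sum_of_subset_of_nonneg (Finset.filter_subset _ _) ?_)
  · intro S hS
    simp only [Finset.mem_filter] at hS
    exact mul_le_mul_of_nonneg_left (pow_le_pow_of_le_one hx0.le hx1 hS.2)
      (Pw_nonneg w hw T S)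
  · intro S _ _
    exact mul_nonneg (Pw_nonneg w hw T S) (pow_nonneg hx0.le _)

lemma tail_ge (hw : ∀ x, 0 ≤ w x ∧ w x ≤ 1) (T : Finset α) (a : ℕ) :
    1 - (3/2 : ℝ) ^ a * Real.exp (-(∑ i ∈ T, w i) / 3)
      ≤ ∑ S ∈ T.powerset.filter (fun S => a + 1 ≤ S.card), Pw w T S := by
  have hsplit : ∑ S ∈ T.powerset.filter (fun S => S.card ≤ a), Pw w T S
      + ∑ S ∈ T.powerset.filter (fun S => a + 1 ≤ S.card), Pw w T S = 1 := by
    rw [← Pw_sum_one w T,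
      ← Finset.sum_filter_add_sum_filter_not T.powerset (fun S => S.card ≤ a) (Pw w T)]
    congr 1
    apply Finset.sum_congr _ (fun _ _ => rfl)
    apply Finset.filter_congr
    intro S _
    simp only [not_le]
    omega
  have h1 := tail_le w hw T a (2/3) (by norm_num) (by norm_num)
  have h2 := genfun_le_exp w hw T (2/3) (by norm_num) (by norm_num)
  have h3 : (∏ i ∈ T, (w i * (2/3) + (1 - w i))) / (2/3 : ℝ) ^ a
      ≤ (3/2 : ℝ) ^ a * Real.exp (-(∑ i ∈ T, w i) / 3) := by
    rw [div_le_iff₀ (by positivity)]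
    have : -(1 - (2/3 : ℝ)) * ∑ i ∈ T, w i = -(∑ i ∈ T, w i) / 3 := by ring
    rw [this] at h2
    calc ∏ i ∈ T, (w i * (2/3) + (1 - w i))
        ≤ Real.exp (-(∑ i ∈ T, w i) / 3) := h2
      _ = (3/2 : ℝ) ^ a * Real.exp (-(∑ i ∈ T, w i) / 3) * (2/3) ^ a := by
          rw [mul_comm ((3/2:ℝ)^a), mul_assoc, ← mul_pow]
          norm_num
  linarith

lemma Pw_insert_left (a : α) (T t : Finset α) (ha : a ∉ T) (ht : t ⊆ T) :
    Pw w (insert a T) t = (1 - w a) * Pw w T t := by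
  have hat : a ∉ t := fun h => ha (ht h)
  have h1 : insert a T \ t = insert a (T \ t) := by
    ext x
    simp only [Finset.mem_sdiff, Finset.mem_insert]
    constructor
    · rintro ⟨h1 | h1, h2⟩
      · exact Or.inl h1
      · exact Or.inr ⟨h1, h2⟩
    · rintro (rfl | ⟨h1, h2⟩)
      · exact ⟨Or.inl rfl, hat⟩
      · exact ⟨Or.inr h1, h2⟩
  have h2 : a ∉ T \ t := by simp [ha]
  unfold Pw
  rw [h1, Finset.prod_insert h2]
  ring

lemma Pw_insert_both (a : α) (T t : Finset α) (ha : a ∉ T) (ht : t ⊆ T) :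
    Pw w (insert a T) (insert a t) = w a * Pw w T t := by
  have hat : a ∉ t := fun h => ha (ht h)
  have h1 : insert a T \ insert a t = T \ t := by
    ext x
    simp only [Finset.mem_sdiff, Finset.mem_insert]
    constructor
    · rintro ⟨h1 | h1, h2⟩
      · exact absurd (Or.inl h1) h2
      · push_neg at h2
        exact ⟨h1, h2.2⟩
    · rintro ⟨h1, h2⟩
      have : x ≠ a := fun h => ha (h ▸ h1)
      exact ⟨Or.inr h1, by simp [this, h2]⟩
  unfold Pw
  rw [h1, Finset.prod_insert hat]
  ring

lemma Pw_decomp (g : ℕ → ℝ) (a : α) (T : Finset α) (ha : a ∉ T) :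
    ∑ S ∈ (insert a T).powerset, Pw w (insert a T) S * g S.card
      = ∑ t ∈ T.powerset, Pw w T t * ((1 - w a) * g t.card + w a * g (t.card + 1)) := by
  rw [Finset.sum_powerset_insert ha]
  rw [← Finset.sum_add_distrib]
  refine Finset.sum_congr rfl fun t ht => ?_
  rw [Finset.mem_powerset] at ht
  have hat : a ∉ t := fun h => ha (ht h)
  rw [Pw_insert_left w a T t ha ht, Pw_insert_both w a T t ha ht,
    Finset.card_insert_of_notMem hat]
  ring

lemma sum_inv_card_le (hw : ∀ x, 0 ≤ w x ∧ w x ≤ 1) (T : Finset α)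
    (hμ : 0 < ∑ i ∈ T, w i) :
    ∑ S ∈ T.powerset, Pw w T S * (1 / (S.card + 1 : ℝ)) ≤ 1 / ∑ i ∈ T, w i := by
  set μ := ∑ i ∈ T, w i with hμdef
  have key : ∑ S ∈ T.powerset, Pw w T S * (1 / (S.card + 1 : ℝ))
      = ∫ x in (0:ℝ)..1, ∏ i ∈ T, (w i * x + (1 - w i)) := by
    calc ∑ S ∈ T.powerset, Pw w T S * (1 / (S.card + 1 : ℝ))
        = ∑ S ∈ T.powerset, ∫ x in (0:ℝ)..1, Pw w T S * x ^ S.card := by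
          refine Finset.sum_congr rfl fun S _ => ?_
          rw [intervalIntegral.integral_const_mul, integral_pow]
          norm_num
      _ = ∫ x in (0:ℝ)..1, ∑ S ∈ T.powerset, Pw w T S * x ^ S.card := by
          rw [intervalIntegral.integral_finset_sum]
          intro S _
          exact Continuous.intervalIntegrable (by continuity) _ _
      _ = _ := intervalIntegral.integral_congr fun x _ => Pw_genfun w T x
  rw [key]
  have h2 : ∫ x in (0:ℝ)..1, ∏ i ∈ T, (w i * x + (1 - w i))
      ≤ ∫ x in (0:ℝ)..1, Real.exp (μ * x - μ) := by
    refine intervalIntegral.integral_mono_on (by norm_num)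
      (Continuous.intervalIntegrable (by continuity) _ _)
      (Continuous.intervalIntegrable (by continuity) _ _) ?_
    intro x hx
    have := genfun_le_exp w hw T x hx.1 hx.2
    have he : -(1 - x) * μ = μ * x - μ := by ring
    rwa [he] at this
  have h3 : ∫ x in (0:ℝ)..1, Real.exp (μ * x - μ) = (1 - Real.exp (-μ)) / μ := by
    have hd : ∀ x ∈ Set.uIcc (0:ℝ) 1,
        HasDerivAt (fun y => Real.exp (μ * y - μ) / μ) (Real.exp (μ * x - μ)) x := by
      intro x _
      have h := (((hasDerivAt_id x).const_mul μ).sub_const μ).exp.div_const μ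
      simpa [mul_one, mul_div_assoc, mul_div_cancel_right₀ _ (ne_of_gt hμ)] using h
    rw [intervalIntegral.integral_eq_sub_of_hasDerivAt hd
      (Continuous.intervalIntegrable (by continuity) _ _)]
    rw [show μ * 1 - μ = 0 by ring, show μ * 0 - μ = -μ by ring, Real.exp_zero]
    ring
  rw [h3] at h2
  refine le_trans h2 ?_
  gcongr
  linarith [Real.exp_pos (-μ)]

end Aux


section Main
variable {α : Type*} [DecidableEq α] (w : α → ℝ)

/-- decomposition of the `p u` numerator sum. -/
lemma A_eq (hw : ∀ x, 0 ≤ w x ∧ w x ≤ 1) (k : ℕ) (a : α) (T : Finset α) (ha : a ∉ T) :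
    (∑ S ∈ (insert a T).powerset.filter (fun S => k - 1 ≤ S.card),
        Pw w (insert a T) S * ((k : ℝ) / ((S.card : ℝ) + 1)))
    = ∑ t ∈ T.powerset, Pw w T t *
        ((1 - w a) * (if k - 1 ≤ t.card then (k:ℝ)/((t.card:ℝ)+1) else 0)
          + w a * (if k - 1 ≤ t.card + 1 then (k:ℝ)/((t.card:ℝ)+1+1) else 0)) := by
  have h1 : (∑ S ∈ (insert a T).powerset.filter (fun S => k - 1 ≤ S.card),
      Pw w (insert a T) S * ((k : ℝ) / ((S.card : ℝ) + 1)))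
      = ∑ S ∈ (insert a T).powerset,
          Pw w (insert a T) S * (if k - 1 ≤ S.card then (k:ℝ)/((S.card:ℝ)+1) else 0) := by
    rw [Finset.sum_filter]
    refine Finset.sum_congr rfl fun S _ => ?_
    split_ifs with h
    · rfl
    · ring
  rw [h1, Pw_decomp w (fun m => if k - 1 ≤ m then (k:ℝ)/((m:ℝ)+1) else 0) a T ha]
  refine Finset.sum_congr rfl fun t _ => ?_
  norm_num [Nat.cast_add]

lemma Z_eq (hw : ∀ x, 0 ≤ w x ∧ w x ≤ 1) (k : ℕ) (u v : α) (W : Finset α)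
    (hu : u ∉ insert v W) (hv : v ∉ W) :
    (∑ S ∈ (insert u (insert v W)).powerset.filter (fun S => k ≤ S.card),
        Pw w (insert u (insert v W)) S)
    = ∑ t ∈ W.powerset, Pw w W t *
        ((1 - w v) * ((1 - w u) * (if k ≤ t.card then (1:ℝ) else 0)
            + w u * (if k ≤ t.card + 1 then (1:ℝ) else 0))
          + w v * ((1 - w u) * (if k ≤ t.card + 1 then (1:ℝ) else 0)
            + w u * (if k ≤ t.card + 1 + 1 then (1:ℝ) else 0))) := by
  have h1 : (∑ S ∈ (insert u (insert v W)).powerset.filter (fun S => k ≤ S.card),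
      Pw w (insert u (insert v W)) S)
      = ∑ S ∈ (insert u (insert v W)).powerset,
          Pw w (insert u (insert v W)) S * (if k ≤ S.card then (1:ℝ) else 0) := by
    rw [Finset.sum_filter]
    refine Finset.sum_congr rfl fun S _ => ?_
    split_ifs with h
    · ring
    · ring
  rw [h1, Pw_decomp w (fun m => if k ≤ m then (1:ℝ) else 0) u (insert v W) hu,
    Pw_decomp w (fun m => (1 - w u) * (if k ≤ m then (1:ℝ) else 0)
      + w u * (if k ≤ m + 1 then (1:ℝ) else 0)) v W hv]

end Main

/-- individual fairness of the Conditioning Mechanism. For `k ≥ 2`,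
weights in `[0,1]` with `Σ_{x∈U} w(x) ≥ 3k/2` that are `(1/α1)`-individually fair
(`α1 = 1.6` if `k ≥ 12`, `α1 = 13` if `2 ≤ k < 12`), the normalizer
`Z = Σ_{S ⊆ U, |S| ≥ k} P^U[S]` is positive and the selection probabilities
`p(u) = w(u)·(Σ_{S ⊆ U∖{u}, |S| ≥ k−1} P^{U∖{u}}[S]·(k/(|S|+1)))/Z` satisfy
`|p(u) − p(v)| ≤ D(u,v)` for all `u, v`. -/
theorem stmt17 {α : Type*} [Fintype α] [DecidableEq α] (w : α → ℝ)
    (hw : ∀ x, 0 ≤ w x ∧ w x ≤ 1) (k : ℕ) (hk : 2 ≤ k)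
    (hsum : 3 * (k : ℝ) / 2 ≤ ∑ x, w x)
    (D : α → α → ℝ) (hD : ∀ u v, 0 ≤ D u v)
    (α1 : ℝ) (hα1 : α1 = if 12 ≤ k then 1.6 else 13)
    (hfairw : ∀ u v, |w u - w v| ≤ D u v / α1)
    (Z : ℝ)
    (hZ : Z = ∑ S ∈ (univ : Finset α).powerset.filter (fun S => k ≤ S.card), Pw w univ S)
    (p : α → ℝ)
    (hp : ∀ u, p u = w u *
      (∑ S ∈ ((univ : Finset α) \ {u}).powerset.filter (fun S => k - 1 ≤ S.card),
        Pw w (univ \ {u}) S * ((k : ℝ) / ((S.card : ℝ) + 1))) / Z) :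
    0 < Z ∧ ∀ u v : α, |p u - p v| ≤ D u v := by
  have hw1 : ∀ x, 0 ≤ w x := fun x => (hw x).1
  have hw2 : ∀ x, w x ≤ 1 := fun x => (hw x).2
  have hα1pos : 0 < α1 := by rw [hα1]; split <;> norm_num
  have hk1 : k - 1 + 1 = k := by omega
  -- Z is positive
  have hZpos : 0 < Z := by
    have h := tail_ge w hw (univ : Finset α) (k-1)
    rw [hk1] at h
    have hF := Zpos_aux k (by omega) (∑ i ∈ (univ : Finset α), w i) hsum
    rw [hZ]
    linarith
  refine ⟨hZpos, fun u v => ?_⟩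
  rcases eq_or_ne u v with rfl | huv
  · simpa using hD u u
  -- setup
  set W : Finset α := (univ : Finset α) \ {u, v} with hWdef
  have huW : u ∉ W := by simp [hWdef]
  have hvW : v ∉ W := by simp [hWdef]
  have huvW : u ∉ insert v W := by simp [huv, huW]
  have hvuW : v ∉ insert u W := by simp [huv.symm, hvW]
  have hins_v : (univ : Finset α) \ {u} = insert v W := by
    ext x
    simp only [hWdef, Finset.mem_sdiff, Finset.mem_insert, Finset.mem_singleton,
      Finset.mem_univ, true_and, not_or]
    constructor
    · intro hx
      rcases eq_or_ne x v with rfl | hxv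
      · exact Or.inl rfl
      · exact Or.inr ⟨hx, hxv⟩
    · rintro (rfl | ⟨hx, -⟩)
      · exact huv.symm
      · exact hx
  have hins_u : (univ : Finset α) \ {v} = insert u W := by
    ext x
    simp only [hWdef, Finset.mem_sdiff, Finset.mem_insert, Finset.mem_singleton,
      Finset.mem_univ, true_and, not_or]
    constructor
    · intro hx
      rcases eq_or_ne x u with rfl | hxu
      · exact Or.inl rfl
      · exact Or.inr ⟨hxu, hx⟩
    · rintro (rfl | ⟨-, hx⟩)
      · exact huv
      · exact hx
  have hins_uv : (univ : Finset α) = insert u (insert v W) := by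
    rw [← hins_v]
    ext x
    simp only [Finset.mem_insert, Finset.mem_sdiff, Finset.mem_univ, true_and,
      Finset.mem_singleton]
    rcases eq_or_ne x u with rfl | hxu
    · tauto
    · tauto
  -- weight of W
  set μW : ℝ := ∑ i ∈ W, w i with hμWdef
  have hμsplit : ∑ x, w x = w u + (w v + μW) := by
    rw [hμWdef, ← Finset.sum_insert hvW, ← Finset.sum_insert huvW, ← hins_uv]
  -- abbreviations
  set B : ℝ := ∑ t ∈ W.powerset, Pw w W t *
      (if k - 1 ≤ t.card then (k:ℝ)/((t.card:ℝ)+1) else 0) with hBdef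
  set q : ℝ := ∑ t ∈ W.powerset, Pw w W t * (if k ≤ t.card then (1:ℝ) else 0) with hqdef
  set q' : ℝ := ∑ t ∈ W.powerset, Pw w W t * (if k - 1 ≤ t.card then (1:ℝ) else 0) with hq'def
  have hPt : ∀ t ∈ W.powerset, 0 ≤ Pw w W t := fun t _ => Pw_nonneg w hw W t
  have hB0 : 0 ≤ B := Finset.sum_nonneg fun t ht => mul_nonneg (hPt t ht) (ite_nonneg (div_nonneg (Nat.cast_nonneg _) (Nat.cast_add_one_pos _).le) le_rfl)
  have hq0 : 0 ≤ q := Finset.sum_nonneg fun t ht => mul_nonneg (hPt t ht) (by positivity)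
  have hq'0 : 0 ≤ q' := Finset.sum_nonneg fun t ht => mul_nonneg (hPt t ht) (by positivity)
  -- key difference formula
  have hkey : p u - p v = (w u - w v) * B / Z := by
    rw [hp u, hp v, hins_v, hins_u, A_eq w hw k v W hvW, A_eq w hw k u W huW, ← sub_div]
    congr 1
    rw [hBdef, Finset.mul_sum, Finset.mul_sum, Finset.mul_sum, ← Finset.sum_sub_distrib]
    refine Finset.sum_congr rfl fun t _ => ?_
    ring
  -- Z decomposition
  have hZd : Z = ∑ t ∈ W.powerset, Pw w W t *
      ((1 - w v) * ((1 - w u) * (if k ≤ t.card then (1:ℝ) else 0)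
          + w u * (if k ≤ t.card + 1 then (1:ℝ) else 0))
        + w v * ((1 - w u) * (if k ≤ t.card + 1 then (1:ℝ) else 0)
          + w u * (if k ≤ t.card + 1 + 1 then (1:ℝ) else 0))) := by
    rw [hZ, hins_uv, Z_eq w hw k u v W huvW hvW]
  -- Z ≥ q
  have hZq : q ≤ Z := by
    rw [hZd, hqdef]
    refine Finset.sum_le_sum fun t ht => ?_
    refine mul_le_mul_of_nonneg_left ?_ (hPt t ht)
    have c0 : (0:ℝ) ≤ (if k ≤ t.card then (1:ℝ) else 0) := by positivity
    have c1 : (0:ℝ) ≤ (if k ≤ t.card + 1 then (1:ℝ) else 0) := by positivity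
    have c2 : (0:ℝ) ≤ (if k ≤ t.card + 1 + 1 then (1:ℝ) else 0) := by positivity
    have m1 : (if k ≤ t.card then (1:ℝ) else 0) ≤ (if k ≤ t.card + 1 then (1:ℝ) else 0) := by
      split_ifs with h1 h2 <;> first | (exfalso; omega) | norm_num
    have m2 : (if k ≤ t.card then (1:ℝ) else 0) ≤ (if k ≤ t.card + 1 + 1 then (1:ℝ) else 0) := by
      split_ifs with h1 h2 <;> first | (exfalso; omega) | norm_num
    have b1 : (if k ≤ t.card then (1:ℝ) else 0) ≤ 1 := by split_ifs <;> norm_num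
    nlinarith [mul_nonneg (mul_nonneg (sub_nonneg.2 (hw2 v)) (hw1 u))
        (sub_nonneg.2 m1),
      mul_nonneg (mul_nonneg (hw1 v) (sub_nonneg.2 (hw2 u))) (sub_nonneg.2 m1),
      mul_nonneg (mul_nonneg (hw1 v) (hw1 u)) (sub_nonneg.2 m2)]
  -- Z ≥ s * q'
  have hZsq' : (w u + w v - w u * w v) * q' ≤ Z := by
    rw [hZd, hq'def, Finset.mul_sum]
    refine Finset.sum_le_sum fun t ht => ?_
    rw [show (w u + w v - w u * w v) * (Pw w W t * (if k - 1 ≤ t.card then (1:ℝ) else 0))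
      = Pw w W t * ((w u + w v - w u * w v) * (if k - 1 ≤ t.card then (1:ℝ) else 0)) by ring]
    refine mul_le_mul_of_nonneg_left ?_ (hPt t ht)
    have c0 : (0:ℝ) ≤ (if k ≤ t.card then (1:ℝ) else 0) := by positivity
    have m1 : (if k - 1 ≤ t.card then (1:ℝ) else 0) ≤ (if k ≤ t.card + 1 then (1:ℝ) else 0) := by
      split_ifs with h1 h2 <;> first | (exfalso; omega) | norm_num
    have m2 : (if k - 1 ≤ t.card then (1:ℝ) else 0)
        ≤ (if k ≤ t.card + 1 + 1 then (1:ℝ) else 0) := by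
      split_ifs with h1 h2 <;> first | (exfalso; omega) | norm_num
    nlinarith [mul_nonneg (mul_nonneg (sub_nonneg.2 (hw2 v)) (sub_nonneg.2 (hw2 u))) c0,
      mul_nonneg (mul_nonneg (sub_nonneg.2 (hw2 v)) (hw1 u)) (sub_nonneg.2 m1),
      mul_nonneg (mul_nonneg (hw1 v) (sub_nonneg.2 (hw2 u))) (sub_nonneg.2 m1),
      mul_nonneg (mul_nonneg (hw1 v) (hw1 u)) (sub_nonneg.2 m2)]
  -- B ≤ q'
  have hBq' : B ≤ q' := by
    rw [hBdef, hq'def]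
    refine Finset.sum_le_sum fun t ht => ?_
    refine mul_le_mul_of_nonneg_left ?_ (hPt t ht)
    split_ifs with h
    · rw [div_le_one (Nat.cast_add_one_pos _)]
      have : (k:ℝ) ≤ (t.card:ℝ) + 1 := by
        have : k ≤ t.card + 1 := by omega
        exact_mod_cast this
      linarith
    · exact le_refl _
  -- main bound B ≤ α1 * Z
  have hBZ : B ≤ α1 * Z := by
    by_cases hcase : 1 ≤ α1 * (w u + w v - w u * w v)
    · calc B ≤ q' := hBq'
        _ ≤ (α1 * (w u + w v - w u * w v)) * q' := le_mul_of_one_le_left hq'0 hcase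
        _ = α1 * ((w u + w v - w u * w v) * q') := by ring
        _ ≤ α1 * Z := mul_le_mul_of_nonneg_left hZsq' hα1pos.le
    · push_neg at hcase
      have hs_u : w u ≤ w u + w v - w u * w v := by nlinarith [hw1 v, hw2 u]
      have hs_v : w v ≤ w u + w v - w u * w v := by nlinarith [hw1 u, hw2 v]
      have huv2 : w u + w v ≤ 2 / α1 := by
        rw [le_div_iff₀ hα1pos]
        nlinarith
      have hμW : 3*(k:ℝ)/2 - 2/α1 ≤ μW := by
        have := hsum
        rw [hμsplit] at this
        linarith
      have hμWpos : 0 < μW := by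
        have h2k : (2:ℝ) ≤ (k:ℝ) := by exact_mod_cast hk
        have hα85 : (8:ℝ)/5 ≤ α1 := by rw [hα1]; split <;> norm_num
        have : 2/α1 ≤ 5/4 := by
          rw [div_le_iff₀ hα1pos]; linarith
        linarith
      -- B ≤ k/μW
      have hBk : B ≤ (k:ℝ) / μW := by
        have step1 : B ≤ ∑ t ∈ W.powerset, Pw w W t * ((k:ℝ) * (1/((t.card:ℝ)+1))) := by
          rw [hBdef]
          refine Finset.sum_le_sum fun t ht => ?_
          refine mul_le_mul_of_nonneg_left ?_ (hPt t ht)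
          split_ifs with h
          · rw [mul_one_div]
          · exact mul_nonneg (Nat.cast_nonneg _) (one_div_nonneg.2 (Nat.cast_add_one_pos _).le)
        have step2 : ∑ t ∈ W.powerset, Pw w W t * ((k:ℝ) * (1/((t.card:ℝ)+1)))
            = (k:ℝ) * ∑ t ∈ W.powerset, Pw w W t * (1/((t.card:ℝ)+1)) := by
          rw [Finset.mul_sum]
          exact Finset.sum_congr rfl fun t _ => by ring
        have step3 := sum_inv_card_le w hw W hμWpos
        calc B ≤ (k:ℝ) * ∑ t ∈ W.powerset, Pw w W t * (1/((t.card:ℝ)+1)) := by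
              rw [← step2]; exact step1
          _ ≤ (k:ℝ) * (1/μW) := mul_le_mul_of_nonneg_left step3 (by positivity)
          _ = (k:ℝ)/μW := by ring
      -- q ≥ 1 - tail
      have hqt : 1 - (3/2:ℝ)^(k-1) * Real.exp (-μW/3) ≤ q := by
        have h := tail_ge w hw W (k-1)
        rw [hk1] at h
        have hq_eq : ∑ S ∈ W.powerset.filter (fun S => k ≤ S.card), Pw w W S = q := by
          rw [hqdef, Finset.sum_filter]
          refine Finset.sum_congr rfl fun t _ => ?_
          split_ifs <;> ring
        rw [hq_eq] at h
        exact h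
      have hnum := numeric_main k hk α1 μW hα1 hμW hμWpos
      have hexp0 : 0 ≤ (3/2:ℝ)^(k-1) * Real.exp (-μW/3) := by positivity
      calc B ≤ (k:ℝ)/μW := hBk
        _ ≤ α1 * (1 - (3/2:ℝ)^(k-1) * Real.exp (-μW/3)) := by nlinarith
        _ ≤ α1 * q := mul_le_mul_of_nonneg_left (by linarith) hα1pos.le
        _ ≤ α1 * Z := mul_le_mul_of_nonneg_left hZq hα1pos.le
  -- finish
  rw [hkey, abs_div, abs_mul, abs_of_pos hZpos, abs_of_nonneg hB0]
  rw [div_le_iff₀ hZpos]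
  have hfw := hfairw u v
  have habs0 : 0 ≤ |w u - w v| := abs_nonneg _
  have hDα : 0 ≤ D u v / α1 := div_nonneg (hD u v) hα1pos.le
  calc |w u - w v| * B ≤ (D u v / α1) * B := mul_le_mul_of_nonneg_right hfw hB0
    _ ≤ (D u v / α1) * (α1 * Z) := mul_le_mul_of_nonneg_left hBZ hDα
    _ = D u v * Z := by field_simp
end

section
/- Let q_i and q_j be disjoint nonempty finite sets, p a real-valued function defined on q_i ∪ q_j, u ∈ q_i, v ∈ q_j, and β ≥ 0, d ≥ 0 real numbers. Suppose p(x) ≥ p(u) − β·d for every x ∈ q_i, p(x) ≤ p(v) + β·d for every x ∈ q_j, and (Σ_{x∈q_i} p(x))/|q_i| − (Σ_{x∈q_j} p(x))/|q_j| ≤ (1 − 2β)·d. Then p(u) − p(v) ≤ d. (This is the cross-group individual fairness claim for a single quality profile vector in the analysis of quality compositional mechanisms: taking p to be the selection probabilities, x_i = Σ_{x∈q_i} p(x) and x_j = Σ_{x∈q_j} p(x) the numbers selected from each quality group, β·d a bound on within-group metric distances, and d the cross-group distance, selection probabilities of individuals in different quality groups differ by at most their metric distance.) -/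
open Finset

/-- cross-group individual fairness for a single quality profile vector.
If `q_i, q_j` are disjoint nonempty finite quality groups, `u ∈ q_i`, `v ∈ q_j`,
`β, d ≥ 0`, `p(x) ≥ p(u) − β·d` on `q_i`, `p(x) ≤ p(v) + β·d` on `q_j`, and
`(Σ_{x∈q_i} p(x))/|q_i| − (Σ_{x∈q_j} p(x))/|q_j| ≤ (1 − 2β)·d`, then
`p(u) − p(v) ≤ d`. -/
theorem stmt19 {α : Type*} [DecidableEq α] (qi qj : Finset α) (hdisj : Disjoint qi qj)
    (hqi : qi.Nonempty) (hqj : qj.Nonempty) (p : α → ℝ) (u v : α)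
    (hu : u ∈ qi) (hv : v ∈ qj) (β d : ℝ) (hβ : 0 ≤ β) (hd : 0 ≤ d)
    (hlow : ∀ x ∈ qi, p u - β * d ≤ p x)
    (hhigh : ∀ x ∈ qj, p x ≤ p v + β * d)
    (havg : (∑ x ∈ qi, p x) / (qi.card : ℝ) - (∑ x ∈ qj, p x) / (qj.card : ℝ)
      ≤ (1 - 2 * β) * d) :
    p u - p v ≤ d := by
  have hci : (0:ℝ) < qi.card := by exact_mod_cast hqi.card_pos
  have hcj : (0:ℝ) < qj.card := by exact_mod_cast hqj.card_pos
  have h1 : p u - β * d ≤ (∑ x ∈ qi, p x) / qi.card := by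
    rw [le_div_iff₀ hci]
    calc (p u - β * d) * qi.card = ∑ _x ∈ qi, (p u - β * d) := by
            rw [Finset.sum_const, nsmul_eq_mul, mul_comm]
      _ ≤ ∑ x ∈ qi, p x := Finset.sum_le_sum hlow
  have h2 : (∑ x ∈ qj, p x) / qj.card ≤ p v + β * d := by
    rw [div_le_iff₀ hcj]
    calc (∑ x ∈ qj, p x) ≤ ∑ _x ∈ qj, (p v + β * d) := Finset.sum_le_sum hhigh
      _ = (p v + β * d) * qj.card := by rw [Finset.sum_const, nsmul_eq_mul, mul_comm]
  nlinarith [havg, h1, h2]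
end
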